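/- Let G and G' be finite simple graphs, each on n vertices, and let k be a natural number with k > 5n². If the k-colouring graphs C_k(G) and C_k(G') are isomorphic, then G and G' are isomorphic. In other words, for k > 5n² the colouring graph C_k(G) uniquely determines G up to isomorphism. -/

import Mathlib

open SimpleGraph

/-- The `k`-colouring graph of `G`: vertices are proper `k`-colourings of `G`,
two colourings being adjacent iff they differ at exactly one vertex. -/
def colGraph {V : Type*} (G : SimpleGraph V) (k : ℕ) :
    SimpleGraph (G.Coloring (Fin k)) where
  Adj c c' := ∃! v, c v ≠ c' v
  symm := by
    constructor
    rintro c c' ⟨v, hv, hu⟩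
    exact ⟨v, hv.symm, fun w hw => hu w hw.symm⟩
  loopless := by
    constructor
    rintro c ⟨v, hv, -⟩
    exact hv rfl

/-- The generalised chromatic polynomial `π_G^(H)(k)`: the number of vertex subsets of
the `k`-colouring graph of `G` that induce a subgraph isomorphic to `H`. -/
noncomputable def piHG {V W : Type*} (G : SimpleGraph V) (H : SimpleGraph W) (k : ℕ) : ℕ :=
  Nat.card {S : Set (G.Coloring (Fin k)) //
    Nonempty (((colGraph G k).induce S) ≃g H)}

set_option linter.unusedSectionVars false

namespace ColAux

variable {V V' : Type*} {G : SimpleGraph V} {G' : SimpleGraph V'} {k : ℕ}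

lemma adj_iff {c c1 : G.Coloring (Fin k)} :
    (colGraph G k).Adj c c1 ↔ ∃! v, c v ≠ c1 v := Iff.rfl

/-- the unique vertex at which two adjacent colourings differ -/
noncomputable def dv {c c1 : G.Coloring (Fin k)} (h : (colGraph G k).Adj c c1) : V :=
  (adj_iff.1 h).exists.choose

lemma dv_spec {c c1 : G.Coloring (Fin k)} (h : (colGraph G k).Adj c c1) :
    c (dv h) ≠ c1 (dv h) := (adj_iff.1 h).exists.choose_spec

lemma dv_eq {c c1 : G.Coloring (Fin k)} (h : (colGraph G k).Adj c c1) {v : V}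
    (hv : c v ≠ c1 v) : dv h = v :=
  (adj_iff.1 h).unique (dv_spec h) hv

lemma eq_of_ne_dv {c c1 : G.Coloring (Fin k)} (h : (colGraph G k).Adj c c1) {u : V}
    (hu : u ≠ dv h) : c u = c1 u := by
  by_contra hne
  exact hu (dv_eq h hne).symm

lemma dv_congr {c c1 d d1 : G.Coloring (Fin k)} (h : (colGraph G k).Adj c c1)
    (h' : (colGraph G k).Adj d d1) (e : c = d) (e1 : c1 = d1) : dv h = dv h' := by
  subst e; subst e1; rfl

variable [DecidableEq V]

/-- update a colouring at one vertex -/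
def upd (c : G.Coloring (Fin k)) (v : V) (a : Fin k)
    (ha : ∀ u, G.Adj v u → a ≠ c u) : G.Coloring (Fin k) :=
  Coloring.mk (Function.update (⇑c) v a) (by
    intro x y hxy
    rcases eq_or_ne x v with rfl | hx
    · have hy : y ≠ x := (G.ne_of_adj hxy).symm
      rw [Function.update_self, Function.update_of_ne hy]
      exact ha y hxy
    · rcases eq_or_ne y v with rfl | hy
      · simp only [Function.update_of_ne hx, Function.update_self]
        exact fun h => ha x (G.adj_symm hxy) h.symm
      · simpa [Function.update_of_ne hx, Function.update_of_ne hy] using c.valid hxy)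

lemma upd_apply {c : G.Coloring (Fin k)} {v : V} {a : Fin k}
    {ha : ∀ u, G.Adj v u → a ≠ c u} (u : V) :
    upd c v a ha u = if u = v then a else c u := Function.update_apply _ _ _ _

lemma upd_same {c : G.Coloring (Fin k)} {v : V} {a : Fin k}
    {ha : ∀ u, G.Adj v u → a ≠ c u} : upd c v a ha v = a := by simp [upd_apply]

lemma upd_noteq {c : G.Coloring (Fin k)} {v : V} {a : Fin k}
    {ha : ∀ u, G.Adj v u → a ≠ c u} {u : V} (hu : u ≠ v) : upd c v a ha u = c u := by
  simp [upd_apply, hu]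

/-- update with a completely fresh colour -/
def cupd (c : G.Coloring (Fin k)) (v : V) (a : Fin k) (ha : ∀ u, a ≠ c u) :
    G.Coloring (Fin k) := upd c v a (fun u _ => ha u)

lemma adj_cupd (c : G.Coloring (Fin k)) (v : V) (a : Fin k) (ha : ∀ u, a ≠ c u) :
    (colGraph G k).Adj c (cupd c v a ha) := by
  refine adj_iff.2 ⟨v, ?_, fun u hu => ?_⟩
  · show c v ≠ cupd c v a ha v
    rw [cupd, upd_same]; exact fun h => ha v h.symm
  · by_contra huv
    exact hu (upd_noteq huv).symm

lemma dv_adj_cupd (c : G.Coloring (Fin k)) (v : V) (a : Fin k) (ha : ∀ u, a ≠ c u) :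
    dv (adj_cupd c v a ha) = v :=
  dv_eq _ (by rw [cupd, upd_same]; exact fun h => ha v h.symm)

lemma exists_fresh [Fintype V] (hcard : Fintype.card V < k) (c : G.Coloring (Fin k)) :
    ∃ a : Fin k, ∀ u, a ≠ c u := by
  by_contra hcon
  push_neg at hcon
  have hsurj : Function.Surjective (⇑c) := fun a => by
    obtain ⟨u, hu⟩ := hcon a; exact ⟨u, hu.symm⟩
  have := Fintype.card_le_of_surjective _ hsurj
  simp only [Fintype.card_fin] at this
  omega

/-- Key lemma A: two neighbours of `c` differ from `c` at the same vertex iff they are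
equal or adjacent. -/
lemma dv_eq_dv_iff {c c1 c2 : G.Coloring (Fin k)} (h1 : (colGraph G k).Adj c c1)
    (h2 : (colGraph G k).Adj c c2) :
    dv h1 = dv h2 ↔ (c1 = c2 ∨ (colGraph G k).Adj c1 c2) := by
  constructor
  · intro hdd
    rcases eq_or_ne (c1 (dv h1)) (c2 (dv h1)) with heq | hne
    · left
      refine DFunLike.ext _ _ fun u => ?_
      rcases eq_or_ne u (dv h1) with rfl | hu
      · exact heq
      · rw [← eq_of_ne_dv h1 hu, eq_of_ne_dv h2 (hdd ▸ hu)]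
    · right
      refine adj_iff.2 ⟨dv h1, hne, fun u hu => ?_⟩
      by_contra huv
      exact hu ((eq_of_ne_dv h1 huv).symm.trans (eq_of_ne_dv h2 (hdd ▸ huv)))
  · rintro (rfl | hadj)
    · exact dv_congr h1 h2 rfl rfl
    · by_contra hdd
      have hx1 : c1 (dv h1) ≠ c2 (dv h1) := fun h =>
        dv_spec h1 ((eq_of_ne_dv h2 hdd).trans h.symm)
      have hx2 : c1 (dv h2) ≠ c2 (dv h2) :=
        fun h => dv_spec h2 (((eq_of_ne_dv h1 (Ne.symm hdd)).trans h))
      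
      exact hdd (((adj_iff.1 hadj).unique hx1 hx2))

/-- Key lemma B2: if `c1, c2` are distinct non-adjacent neighbours of `c` whose only
common neighbour is `c`, then the vertices at which they differ from `c` are adjacent
in `G`. -/
lemma P_to_adj {c c1 c2 : G.Coloring (Fin k)} (h1 : (colGraph G k).Adj c c1)
    (h2 : (colGraph G k).Adj c c2) (hne : c1 ≠ c2) (hnadj : ¬ (colGraph G k).Adj c1 c2)
    (huniq : ∀ x, (colGraph G k).Adj c1 x → (colGraph G k).Adj c2 x → x = c) :
    G.Adj (dv h1) (dv h2) := by
  set v := dv h1 with hv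
  set w := dv h2 with hw
  have hvw : v ≠ w := by
    intro hEq
    rcases (dv_eq_dv_iff h1 h2).1 hEq with h | h
    · exact hne h
    · exact hnadj h
  by_contra hnadjG
  -- build the fourth corner of the square
  have pf1 : ∀ u, G.Adj v u → c1 v ≠ c u := by
    intro u hu
    rw [eq_of_ne_dv h1 (G.ne_of_adj hu).symm]
    exact c1.valid hu
  set c3' := upd c v (c1 v) pf1 with hc3'
  have pf2 : ∀ u, G.Adj w u → c2 w ≠ c3' u := by
    intro u hu
    have huv : u ≠ v := fun h => hnadjG (G.adj_symm (h ▸ hu))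
    rw [hc3', upd_noteq huv, eq_of_ne_dv h2 (G.ne_of_adj hu).symm]
    exact c2.valid hu
  set c3 := upd c3' w (c2 w) pf2 with hc3
  have hc3v : c3 v = c1 v := by rw [hc3, upd_noteq hvw, hc3', upd_same]
  have hc3w : c3 w = c2 w := by rw [hc3, upd_same]
  have hc3o : ∀ u, u ≠ v → u ≠ w → c3 u = c u := by
    intro u huv huw
    rw [hc3, upd_noteq huw, hc3', upd_noteq huv]
  have hadj13 : (colGraph G k).Adj c1 c3 := by
    refine adj_iff.2 ⟨w, ?_, fun u hu => ?_⟩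
    · show c1 w ≠ c3 w
      rw [hc3w, ← eq_of_ne_dv h1 (Ne.symm hvw)]
      exact dv_spec h2
    · by_contra huw
      rcases eq_or_ne u v with rfl | huv
      · exact hu hc3v.symm
      · exact hu ((eq_of_ne_dv h1 huv).symm.trans (hc3o u huv huw).symm)
  have hadj23 : (colGraph G k).Adj c2 c3 := by
    refine adj_iff.2 ⟨v, ?_, fun u hu => ?_⟩
    · show c2 v ≠ c3 v
      rw [hc3v, ← eq_of_ne_dv h2 hvw]
      exact dv_spec h1
    · by_contra huv
      rcases eq_or_ne u w with rfl | huw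
      · exact hu hc3w.symm
      · exact hu ((eq_of_ne_dv h2 huw).symm.trans (hc3o u huv huw).symm)
  have := huniq c3 hadj13 hadj23
  have : c3 v = c v := by rw [this]
  rw [hc3v] at this
  exact dv_spec h1 this.symm

/-- Key lemma B1: adjacency in `G` produces such a configuration. -/
lemma adj_to_P [Fintype V] (hcard : Fintype.card V < k) {v w : V} (hvw : G.Adj v w)
    (c : G.Coloring (Fin k)) :
    ∃ (c1 c2 : G.Coloring (Fin k)) (h1 : (colGraph G k).Adj c c1)
      (h2 : (colGraph G k).Adj c c2), dv h1 = v ∧ dv h2 = w ∧ c1 ≠ c2 ∧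
      ¬ (colGraph G k).Adj c1 c2 ∧
      ∀ x, (colGraph G k).Adj c1 x → (colGraph G k).Adj c2 x → x = c := by
  obtain ⟨a, ha⟩ := exists_fresh hcard c
  have hvw' : v ≠ w := G.ne_of_adj hvw
  set c1 := cupd c v a ha with hc1
  set c2 := cupd c w a ha with hc2
  have h1 := adj_cupd c v a ha
  have h2 := adj_cupd c w a ha
  have hc1v : c1 v = a := by rw [hc1, cupd, upd_same]
  have hc1o : ∀ u, u ≠ v → c1 u = c u := fun u hu => by rw [hc1, cupd, upd_noteq hu]
  have hc2w : c2 w = a := by rw [hc2, cupd, upd_same]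
  have hc2o : ∀ u, u ≠ w → c2 u = c u := fun u hu => by rw [hc2, cupd, upd_noteq hu]
  refine ⟨c1, c2, h1, h2, dv_adj_cupd c v a ha, dv_adj_cupd c w a ha, ?_, ?_, ?_⟩
  · intro hEq
    have : c1 v = c2 v := by rw [hEq]
    rw [hc1v, hc2o v hvw'] at this
    exact ha v this
  · intro hadj
    have hdvv : dv hadj = v := dv_eq hadj (by
      rw [hc1v, hc2o v hvw']; exact ha v)
    have hdvw : dv hadj = w := dv_eq hadj (by
      rw [hc2w, hc1o w (Ne.symm hvw')]; exact fun h => ha w h.symm)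
    exact hvw' (hdvv ▸ hdvw)
  · intro x hx1 hx2
    rcases eq_or_ne (dv hx1) v with hu1v | hu1v
    · -- x = c
      have hxw : x w = c w := by
        rw [← eq_of_ne_dv hx1 (hu1v ▸ (Ne.symm hvw') : w ≠ dv hx1), hc1o w (Ne.symm hvw')]
      have hu2w : dv hx2 = w := dv_eq hx2 (by
        rw [hc2w, hxw]; exact ha w)
      refine DFunLike.ext _ _ fun u => ?_
      rcases eq_or_ne u w with rfl | huw
      · exact hxw
      · rcases eq_or_ne u v with rfl | huv
        · rw [← eq_of_ne_dv hx2 (hu2w ▸ hvw' : u ≠ dv hx2), hc2o u hvw']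
        · rw [← eq_of_ne_dv hx1 (hu1v ▸ huv : u ≠ dv hx1), hc1o u huv]
    · rcases eq_or_ne (dv hx1) w with hu1w | hu1w
      · -- contradiction via properness at v,w
        have hxv : x v = a := by
          rw [← eq_of_ne_dv hx1 (hu1w ▸ hvw' : v ≠ dv hx1), hc1v]
        have hu2v : dv hx2 = v := dv_eq hx2 (by
          rw [hc2o v hvw', hxv]; exact fun h => ha v h.symm)
        have hxw : x w = a := by
          rw [← eq_of_ne_dv hx2 (hu2v ▸ (Ne.symm hvw') : w ≠ dv hx2), hc2w]
        exact absurd (hxv.trans hxw.symm) (x.valid hvw)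
      · -- contradiction
        have hxv : x v = a := by
          rw [← eq_of_ne_dv hx1 (Ne.symm hu1v), hc1v]
        have hu2v : dv hx2 = v := dv_eq hx2 (by
          rw [hc2o v hvw', hxv]; exact fun h => ha v h.symm)
        have h1' : x (dv hx1) = c (dv hx1) := by
          rw [← eq_of_ne_dv hx2 (hu2v ▸ hu1v : dv hx1 ≠ dv hx2), hc2o _ hu1w]
        have h2' : c1 (dv hx1) = c (dv hx1) := hc1o _ hu1v
        exact absurd (h2'.trans h1'.symm) (dv_spec hx1)

end ColAux

namespace ColAux

section Transfer

variable {V V' : Type*} {G : SimpleGraph V} {G' : SimpleGraph V'} {k : ℕ}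
variable [DecidableEq V] [DecidableEq V']

/-- transfer a vertex of `G` across an isomorphism of colouring graphs -/
noncomputable def trans (φ : colGraph G k ≃g colGraph G' k) (c : G.Coloring (Fin k))
    (a : Fin k) (ha : ∀ u, a ≠ c u) (v : V) : V' :=
  dv (φ.map_adj_iff.mpr (adj_cupd c v a ha))

lemma dv_map (φ : colGraph G k ≃g colGraph G' k) (c : G.Coloring (Fin k))
    (a : Fin k) (ha : ∀ u, a ≠ c u) {c1 : G.Coloring (Fin k)} {v : V}
    (h1 : (colGraph G k).Adj c c1) (hdv : dv h1 = v)
    (h1' : (colGraph G' k).Adj (φ c) (φ c1)) :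
    dv h1' = trans φ c a ha v := by
  have h2 := adj_cupd c v a ha
  have hor : c1 = cupd c v a ha ∨ (colGraph G k).Adj c1 (cupd c v a ha) :=
    (dv_eq_dv_iff h1 h2).1 (by rw [hdv, dv_adj_cupd])
  have hor' : φ c1 = φ (cupd c v a ha) ∨
      (colGraph G' k).Adj (φ c1) (φ (cupd c v a ha)) :=
    hor.imp (congrArg φ) φ.map_adj_iff.mpr
  exact (dv_eq_dv_iff h1' (φ.map_adj_iff.mpr h2)).2 hor'

lemma trans_adj [Fintype V] (hcard : Fintype.card V < k)
    (φ : colGraph G k ≃g colGraph G' k) (c : G.Coloring (Fin k))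
    (a : Fin k) (ha : ∀ u, a ≠ c u) {v w : V} (hvw : G.Adj v w) :
    G'.Adj (trans φ c a ha v) (trans φ c a ha w) := by
  obtain ⟨c1, c2, h1, h2, hd1, hd2, hne, hnadj, huniq⟩ := adj_to_P hcard hvw c
  have h1' : (colGraph G' k).Adj (φ c) (φ c1) := φ.map_adj_iff.mpr h1
  have h2' : (colGraph G' k).Adj (φ c) (φ c2) := φ.map_adj_iff.mpr h2
  rw [← dv_map φ c a ha h1 hd1 h1', ← dv_map φ c a ha h2 hd2 h2']
  refine P_to_adj h1' h2' (fun he => hne (φ.injective he))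
    (fun hadj => hnadj (φ.map_adj_iff.mp hadj)) ?_
  intro x hx1 hx2
  have e : φ (φ.symm x) = x := φ.apply_symm_apply x
  have hx1' : (colGraph G k).Adj c1 (φ.symm x) := φ.map_adj_iff.mp (by rw [e]; exact hx1)
  have hx2' : (colGraph G k).Adj c2 (φ.symm x) := φ.map_adj_iff.mp (by rw [e]; exact hx2)
  have hxc := huniq _ hx1' hx2'
  rw [← e, hxc]

lemma trans_cancel (φ : colGraph G k ≃g colGraph G' k) (c : G.Coloring (Fin k))
    (a : Fin k) (ha : ∀ u, a ≠ c u) (b : Fin k)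
    (hb : ∀ u, b ≠ (φ c) u) (v : V) :
    trans φ.symm (φ c) b hb (trans φ c a ha v) = v := by
  have h2 : (colGraph G k).Adj c (cupd c v a ha) := adj_cupd c v a ha
  have h : (colGraph G' k).Adj (φ c) (φ (cupd c v a ha)) := φ.map_adj_iff.mpr h2
  have h'' : (colGraph G k).Adj (φ.symm (φ c)) (φ.symm (φ (cupd c v a ha))) :=
    φ.symm.map_adj_iff.mpr h
  have e1 := dv_map φ.symm (φ c) b hb h rfl h''
  show trans φ.symm (φ c) b hb (dv h) = v
  rw [← e1, dv_congr h'' h2 (φ.symm_apply_apply c) (φ.symm_apply_apply _)]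
  exact dv_adj_cupd c v a ha

end Transfer

end ColAux


/-- For `k > 5n²`, the `k`-colouring graph of a graph on `n` vertices determines the
graph up to isomorphism. -/
theorem colouring_graph_determines_graph {V V' : Type*} [Fintype V] [Fintype V']
    (G : SimpleGraph V) (G' : SimpleGraph V') (n : ℕ)
    (hV : Fintype.card V = n) (hV' : Fintype.card V' = n)
    (k : ℕ) (hk : 5 * n ^ 2 < k)
    (h : Nonempty (colGraph G k ≃g colGraph G' k)) :
    Nonempty (G ≃g G') := by
  classical
  obtain ⟨φ⟩ := h
  have hn : n < k := by
    have h0 : n ≤ n ^ 2 := Nat.le_self_pow two_ne_zero n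
    have h1 : n ^ 2 ≤ 5 * n ^ 2 := Nat.le_mul_of_pos_left _ (by norm_num)
    exact lt_of_le_of_lt (h0.trans h1) hk
  have hcV : Fintype.card V < k := by rw [hV]; exact hn
  have hcV' : Fintype.card V' < k := by rw [hV']; exact hn
  obtain ⟨c⟩ : Nonempty (G.Coloring (Fin k)) := G.colorable_of_fintype.mono hcV.le
  obtain ⟨a, ha⟩ := ColAux.exists_fresh hcV c
  obtain ⟨a', ha'⟩ := ColAux.exists_fresh hcV' (φ c)
  refine ⟨⟨⟨ColAux.trans φ c a ha, ColAux.trans φ.symm (φ c) a' ha', ?_, ?_⟩, ?_⟩⟩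
  · intro v
    exact ColAux.trans_cancel φ c a ha a' ha' v
  · intro w
    have := ColAux.trans_cancel φ.symm (φ c) a' ha' a
      (by simpa using ha) w
    simpa using this
  · intro v w
    show G'.Adj (ColAux.trans φ c a ha v) (ColAux.trans φ c a ha w) ↔ G.Adj v w
    constructor
    · intro hadj
      have h2 := ColAux.trans_adj hcV' φ.symm (φ c) a' ha' hadj
      rwa [ColAux.trans_cancel φ c a ha a' ha' v,
        ColAux.trans_cancel φ c a ha a' ha' w] at h2
    · exact fun hadj => ColAux.trans_adj hcV φ c a ha hadj
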